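/- Let p ≥ q ≥ r be positive integers with gcd(p,q,r)=1 such that q divides p and p+q ≤ rq. Then for every n ≥ 1, the maximum size of a subset of {1,...,n} containing no solution (x,y,z) to px+qy=rz equals ⌈(q−1)n/q⌉. -/

import Mathlib

private lemma stmt4_div_eq (q n : ℕ) (hq : 1 ≤ q) :
    ((q - 1) * n + q - 1) / q = n - n / q := by
  have h := Nat.div_add_mod n q
  have hb : n % q < q := Nat.mod_lt _ (by omega)
  set a := n / q with ha
  set b := n % q with hbdef
  have han : a ≤ n := Nat.div_le_self _ _
  have key : (q - 1) * n + q - 1 = q * (n - a) + (q - 1 - b) := by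
    have h2 : q * (n - a) = q * n - q * a := Nat.mul_sub _ _ _
    have h3 : (q - 1) * n = q * n - n := by rw [Nat.sub_mul, one_mul]
    have hqn : q * a ≤ q * n := Nat.mul_le_mul_left q han
    have hnqn : n ≤ q * n := Nat.le_mul_of_pos_left n (by omega)
    omega
  rw [key, Nat.mul_add_div (by omega : 0 < q), Nat.div_eq_of_lt (by omega)]
  omega

private lemma stmt4_upper (q r k n : ℕ) (hq : 0 < q) (hk : 0 < k)
    (hr : k + 1 ≤ r) (hrq : r ≤ q)
    (A : Finset ℕ) (hsub : A ⊆ Finset.Icc 1 n)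
    (hfree : ∀ x ∈ A, ∀ y ∈ A, ∀ z ∈ A, (q * k) * x + q * y ≠ r * z) :
    A.card ≤ n - n / q := by
  classical
  set t := n / q with ht
  have hqt : q * t ≤ n := by
    rw [ht, Nat.mul_comm]
    exact Nat.div_mul_le_self n q
  have htn : t ≤ n := Nat.div_le_self _ _
  set C := Finset.Icc 1 n \ A with hC
  have hAcard : A.card ≤ n := by
    have := Finset.card_le_card hsub
    simpa using this
  have hCcard : C.card = n - A.card := by
    rw [hC, Finset.card_sdiff_of_subset hsub, Nat.card_Icc]
    omega
  -- main claim : t ≤ C.card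
  have main : t ≤ C.card := by
    set M := (Finset.Icc 1 t).filter (fun m => q * m ∈ A) with hM
    by_cases hMe : M = ∅
    · -- no multiple of q in A (among q*[1,t]) : all q*m are in C
      have maps : ∀ m ∈ Finset.Icc 1 t, q * m ∈ C := by
        intro m hm
        rw [Finset.mem_Icc] at hm
        have hqm : q * m ∉ A := by
          intro hcon
          have : m ∈ M := by
            rw [hM, Finset.mem_filter, Finset.mem_Icc]
            exact ⟨hm, hcon⟩
          rw [hMe] at this
          exact absurd this (Finset.notMem_empty m)
        rw [hC, Finset.mem_sdiff, Finset.mem_Icc]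
        refine ⟨⟨by nlinarith, ?_⟩, hqm⟩
        calc q * m ≤ q * t := Nat.mul_le_mul_left q hm.2
        _ ≤ n := hqt
      have inj : Set.InjOn (fun m => q * m) ↑(Finset.Icc 1 t) := by
        intro a _ b _ hab
        exact Nat.eq_of_mul_eq_mul_left hq hab
      have := Finset.card_le_card_of_injOn (fun m => q * m) maps inj
      simpa using this
    · obtain ⟨b, hbM⟩ := Finset.nonempty_iff_ne_empty.mpr hMe
      -- take the max element
      have hne : M.Nonempty := ⟨b, hbM⟩
      set b0 := M.max' hne with hb0
      have hb0M : b0 ∈ M := M.max'_mem hne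
      have hb0max : ∀ m ∈ M, m ≤ b0 := fun m hm => M.le_max' m hm
      rw [hM, Finset.mem_filter, Finset.mem_Icc] at hb0M
      obtain ⟨⟨hb1, hbt⟩, hqbA⟩ := hb0M
      -- key facts
      have hkb : ∀ m, m ≤ b0 → k * m + b0 ≤ r * b0 := by
        intro m hm
        have h1 : k * m ≤ k * b0 := Nat.mul_le_mul_left k hm
        have h2 : (k + 1) * b0 ≤ r * b0 := Nat.mul_le_mul_right b0 hr
        nlinarith
      have hrbqb : r * b0 ≤ q * b0 := Nat.mul_le_mul_right b0 hrq
      have hqbn : q * b0 ≤ n := by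
        calc q * b0 ≤ q * t := Nat.mul_le_mul_left q hbt
        _ ≤ n := hqt
      -- if m ∈ A and m ≤ b0 then r*b0 - k*m ∉ A
      have hyC : ∀ m, 1 ≤ m → m ≤ b0 → m ∈ A → (r * b0 - k * m) ∈ C := by
        intro m hm1 hmb hmA
        have hle1 : k * m + b0 ≤ r * b0 := hkb m hmb
        have hy : k * m + (r * b0 - k * m) = r * b0 := by omega
        have hy1 : 1 ≤ r * b0 - k * m := by omega
        have hyn : r * b0 - k * m ≤ n := by omega
        rw [hC, Finset.mem_sdiff, Finset.mem_Icc]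
        refine ⟨⟨hy1, hyn⟩, ?_⟩
        intro hyA
        apply hfree m hmA (r * b0 - k * m) hyA (q * b0) hqbA
        calc (q * k) * m + q * (r * b0 - k * m)
            = q * (k * m + (r * b0 - k * m)) := by ring
        _ = q * (r * b0) := by rw [hy]
        _ = r * (q * b0) := by ring
      -- the injection
      set F : ℕ → ℕ := fun m => if b0 < m then q * m
        else if m ∈ A then r * b0 - k * m else m with hF
      have maps : ∀ m ∈ Finset.Icc 1 t, F m ∈ C := by
        intro m hm
        rw [Finset.mem_Icc] at hm
        rw [hF]
        by_cases h1 : b0 < m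
        · simp only [if_pos h1]
          have hqm : q * m ∉ A := by
            intro hcon
            have : m ∈ M := by
              rw [hM, Finset.mem_filter, Finset.mem_Icc]
              exact ⟨hm, hcon⟩
            exact absurd (hb0max m this) (by omega)
          rw [hC, Finset.mem_sdiff, Finset.mem_Icc]
          refine ⟨⟨by nlinarith, ?_⟩, hqm⟩
          calc q * m ≤ q * t := Nat.mul_le_mul_left q hm.2
          _ ≤ n := hqt
        · simp only [if_neg h1]
          push_neg at h1
          by_cases h2 : m ∈ A
          · simp only [if_pos h2]
            exact hyC m hm.1 h1 h2
          · simp only [if_neg h2]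
            rw [hC, Finset.mem_sdiff, Finset.mem_Icc]
            exact ⟨⟨hm.1, by omega⟩, h2⟩
      have inj : Set.InjOn F ↑(Finset.Icc 1 t) := by
        intro m1 hm1 m2 hm2 heq
        rw [Finset.coe_Icc, Set.mem_Icc] at hm1 hm2
        rw [hF] at heq
        simp only at heq
        -- helper inequalities
        by_cases c1 : b0 < m1 <;> by_cases c2 : b0 < m2
        · rw [if_pos c1, if_pos c2] at heq
          exact Nat.eq_of_mul_eq_mul_left hq heq
        · exfalso
          rw [if_pos c1, if_neg c2] at heq
          push_neg at c2
          have hbig : q * b0 + q ≤ q * m1 := by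
            have : q * (b0 + 1) ≤ q * m1 := Nat.mul_le_mul_left q c1
            nlinarith
          by_cases d2 : m2 ∈ A
          · rw [if_pos d2] at heq
            have := hkb m2 c2
            omega
          · rw [if_neg d2] at heq
            have hb0qb : b0 ≤ q * b0 := Nat.le_mul_of_pos_left b0 hq
            omega
        · exfalso
          rw [if_neg c1, if_pos c2] at heq
          push_neg at c1
          have hbig : q * b0 + q ≤ q * m2 := by
            have : q * (b0 + 1) ≤ q * m2 := Nat.mul_le_mul_left q c2
            nlinarith
          by_cases d1 : m1 ∈ A
          · rw [if_pos d1] at heq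
            have := hkb m1 c1
            omega
          · rw [if_neg d1] at heq
            have hb0qb : b0 ≤ q * b0 := Nat.le_mul_of_pos_left b0 hq
            omega
        · rw [if_neg c1, if_neg c2] at heq
          push_neg at c1; push_neg at c2
          have hk1 := hkb m1 c1
          have hk2 := hkb m2 c2
          have hkm1 : k * m1 ≤ k * b0 := Nat.mul_le_mul_left k c1
          have hkm2 : k * m2 ≤ k * b0 := Nat.mul_le_mul_left k c2
          by_cases d1 : m1 ∈ A <;> by_cases d2 : m2 ∈ A
          · rw [if_pos d1, if_pos d2] at heq
            have : k * m1 = k * m2 := by omega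
            exact Nat.eq_of_mul_eq_mul_left hk this
          · -- r*b0 - k*m1 = m2, with m2 ≤ b0 ≤ r*b0 - k*m1 forces equality chain
            rw [if_pos d1, if_neg d2] at heq
            -- heq : r * b0 - k * m1 = m2
            have hm2b : m2 = b0 := by omega
            have : k * m1 = r * b0 - b0 := by omega
            have hkb0 : k * b0 ≤ r * b0 - b0 := by
              have := hkb b0 (le_refl b0); omega
            have : k * b0 ≤ k * m1 := by omega
            have hm1b : b0 ≤ m1 := Nat.le_of_mul_le_mul_left this hk
            omega
          · rw [if_neg d1, if_pos d2] at heq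
            have hm1b : m1 = b0 := by omega
            have : k * m2 = r * b0 - b0 := by omega
            have hkb0 : k * b0 ≤ r * b0 - b0 := by
              have := hkb b0 (le_refl b0); omega
            have : k * b0 ≤ k * m2 := by omega
            have hm2b : b0 ≤ m2 := Nat.le_of_mul_le_mul_left this hk
            omega
          · rw [if_neg d1, if_neg d2] at heq
            exact heq
      have := Finset.card_le_card_of_injOn F maps inj
      simpa using this
  omega

theorem stmt4 (p q r : ℕ) (hrq : r ≤ q) (hqp : q ≤ p) (hr : 0 < r)
    (hgcd : Nat.gcd (Nat.gcd p q) r = 1) (hdvd : q ∣ p) (hle : p + q ≤ r * q)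
    (n : ℕ) (hn : 1 ≤ n) :
    IsGreatest {m : ℕ | ∃ A : Finset ℕ, A ⊆ Finset.Icc 1 n ∧
      (∀ x ∈ A, ∀ y ∈ A, ∀ z ∈ A, p * x + q * y ≠ r * z) ∧ A.card = m}
      (((q - 1) * n + q - 1) / q) := by
  classical
  obtain ⟨k, hpk⟩ := hdvd
  have hq0 : 0 < q := lt_of_lt_of_le hr hrq
  have hk1 : 1 ≤ k := by
    rcases Nat.eq_zero_or_pos k with h | h
    · subst h; simp at hpk; omega
    · exact h
  have hrk : k + 1 ≤ r := by
    have : q * (k + 1) ≤ q * r := by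
      calc q * (k + 1) = p + q := by rw [hpk]; ring
      _ ≤ r * q := hle
      _ = q * r := by ring
    exact Nat.le_of_mul_le_mul_left this hq0
  have hcop : Nat.Coprime q r := by
    have h1 : Nat.gcd p q = q := Nat.gcd_eq_right ⟨k, hpk⟩
    rwa [h1] at hgcd
  have hdivq : ((q - 1) * n + q - 1) / q = n - n / q := stmt4_div_eq q n (by omega)
  rw [hdivq]
  constructor
  · -- membership : the set of non-multiples of q
    refine ⟨(Finset.Icc 1 n).filter (fun a => ¬ q ∣ a), Finset.filter_subset _ _, ?_, ?_⟩
    · intro x hx y hy z hz habs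
      rw [Finset.mem_filter] at hx hy hz
      have hqd : q ∣ r * z := by
        rw [← habs]
        exact ⟨k * x + y, by rw [hpk]; ring⟩
      exact hz.2 (hcop.dvd_of_dvd_mul_left hqd)
    · have hIoc : Finset.Icc 1 n = Finset.Ioc 0 n := by
        exact Finset.Icc_add_one_left_eq_Ioc 0 n
      have hdvdcard : ((Finset.Icc 1 n).filter (fun a => q ∣ a)).card = n / q := by
        rw [hIoc]
        exact Nat.Ioc_filter_dvd_card_eq_div n q
      have := Finset.card_filter_add_card_filter_not
        (s := Finset.Icc 1 n) (p := fun a => q ∣ a)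
      rw [hdvdcard, Nat.card_Icc] at this
      omega
  · -- upper bound
    rintro m ⟨A, hsub, hfree, rfl⟩
    have hfree' : ∀ x ∈ A, ∀ y ∈ A, ∀ z ∈ A, (q * k) * x + q * y ≠ r * z := by
      rw [← hpk]; exact hfree
    exact stmt4_upper q r k n hq0 (by omega) hrk hrq A hsub hfree'
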